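/- arXiv:1811.11395 — 2 statements merged into one kernel-verified Lean document; each statement's English description precedes it below -/
import Mathlib

section
/- Let k be a field and let ι_i : k → K_i (1 ≤ i ≤ n) be field embeddings. Let k_i denote the algebraic closure of k inside K_i, with induced embeddings ι'_i : k → k_i. Then the family {ι_i} satisfies property (F) if and only if the family {ι'_i} satisfies property (F). -/
/-- `x : E` is separable and algebraic over `k` (relative to the embedding `f : k →+* E`):
it is a root of a nonzero separable polynomial with coefficients in `k`. -/
def IsSepElem {k E : Type} [Field k] [Field E] (f : k →+* E) (x : E) : Prop :=
  ∃ p : Polynomial k, p ≠ 0 ∧ p.Separable ∧ Polynomial.eval₂ f x p = 0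

/-- `x : E` is algebraic over `k` relative to the ring homomorphism `f : k →+* E`. -/
def IsAlgElem {k E : Type} [Field k] [CommRing E] (f : k →+* E) (x : E) : Prop :=
  ∃ p : Polynomial k, p ≠ 0 ∧ Polynomial.eval₂ f x p = 0

/-- Property (F) for a family of field embeddings `f i : k →+* K i`:
for any algebraic separable field extensions `g i : K i →+* L i` and any subring `l` of the
product ring `∀ i, L i` which is a field, contains the diagonal copy of `k`, and is algebraic
over `k`, the extension `k ⊆ l` is separable. -/
def PropertyF {ι : Type} (k : Type) [Field k] (K : ι → Type) [∀ i, Field (K i)]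
    (f : ∀ i, k →+* K i) : Prop :=
  ∀ (L : ι → Type) (_ : ∀ i, Field (L i)) (g : ∀ i, K i →+* L i),
    (∀ i, ∀ x : L i, IsSepElem (g i) x) →
    ∀ l : Subring (∀ i, L i), IsField l →
      (∀ c : k, (fun i => g i (f i c)) ∈ l) →
      (∀ x ∈ l, IsAlgElem (Pi.ringHom fun i => (g i).comp (f i)) x) →
      ∀ x ∈ l, ∃ p : Polynomial k, p ≠ 0 ∧ p.Separable ∧
        Polynomial.eval₂ (Pi.ringHom fun i => (g i).comp (f i)) x p = 0

open Polynomial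

section Aux

lemma isField_map {R S : Type} [CommRing R] [CommRing S] (v : R →+* S)
    (hv : Function.Injective v) (l : Subring R) (hl : IsField l) : IsField (l.map v) := by
  refine ⟨?_, mul_comm, ?_⟩
  · obtain ⟨a, b, hab⟩ := hl.exists_pair_ne
    refine ⟨⟨v a, a, a.2, rfl⟩, ⟨v b, b, b.2, rfl⟩, fun hc => hab ?_⟩
    have : v (a : R) = v (b : R) := congrArg Subtype.val hc
    exact Subtype.ext (hv this)
  · rintro ⟨y, x, hx, rfl⟩ hy0
    have hx0 : (⟨x, hx⟩ : l) ≠ 0 := by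
      rintro h
      apply hy0
      have : x = 0 := congrArg Subtype.val h
      simp [this, Subtype.ext_iff]
    obtain ⟨z, hz⟩ := hl.mul_inv_cancel hx0
    refine ⟨⟨v z, z, z.2, rfl⟩, ?_⟩
    have : x * (z : R) = 1 := congrArg Subtype.val hz
    apply Subtype.ext
    show v x * v z = 1
    rw [← map_mul, this, map_one]

set_option maxHeartbeats 1000000 in
lemma keyX {k K L : Type} [Field k] [Field K] [Field L] (fk : k →+* K) (g : K →+* L)
    (A : Subfield K) (hA : ∀ z : K, z ∈ A ↔ IsAlgElem fk z)
    (y : L) (hy : IsAlgElem (g.comp fk) y) (hs : IsSepElem g y) :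
    IsSepElem (g.comp A.subtype) y := by
  letI : Algebra k K := fk.toAlgebra
  letI : Algebra K L := g.toAlgebra
  letI : Algebra k L := (g.comp fk).toAlgebra
  haveI : IsScalarTower k K L := IsScalarTower.of_algebraMap_eq fun c => rfl
  have hyint : IsIntegral k y := by
    obtain ⟨p, hp0, hpe⟩ := hy
    exact (IsAlgebraic.isIntegral ⟨p, hp0, by rwa [aeval_def]⟩)
  have hyK : IsIntegral K y := hyint.tower_top
  have hgsep : (minpoly K y).Separable := by
    obtain ⟨q, hq0, hqs, hqe⟩ := hs
    exact hqs.of_dvd (minpoly.dvd K y (by rwa [aeval_def]))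
  have hdvd : minpoly K y ∣ (minpoly k y).map (algebraMap k K) :=
    minpoly.dvd_map_of_isScalarTower k K y
  have hlift := integralClosure.mem_lifts_of_monic_of_dvd_map K (minpoly.monic hyint)
    (minpoly.monic hyK) hdvd
  rw [lifts_iff_coeff_lifts] at hlift
  have hmem : minpoly K y ∈ lifts (A.subtype : ↥A →+* K) := by
    rw [lifts_iff_coeff_lifts]
    intro n
    obtain ⟨⟨c', hc'⟩, hcc⟩ := hlift n
    have hint : IsIntegral k c' := hc'
    have hcA : c' ∈ A := by
      rw [hA]
      obtain ⟨p, hp0, hpe⟩ := hint.isAlgebraic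
      exact ⟨p, hp0, by rwa [aeval_def] at hpe⟩
    exact ⟨⟨c', hcA⟩, hcc⟩
  rw [mem_lifts] at hmem
  obtain ⟨p₀, hmap⟩ := hmem
  have hne : p₀ ≠ 0 := by
    intro h
    apply minpoly.ne_zero hyK
    rw [← hmap, h, Polynomial.map_zero]
  have hsep : p₀.Separable := by
    have h2 := hgsep
    rw [← hmap] at h2
    exact (separable_map _).mp h2
  refine ⟨p₀, hne, hsep, ?_⟩
  have h3 : eval₂ g y (p₀.map (A.subtype : ↥A →+* K)) = eval₂ (g.comp A.subtype) y p₀ :=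
    eval₂_map _ _ _
  have h2 : eval₂ g y (minpoly K y) = 0 := by
    have := minpoly.aeval K y
    rwa [aeval_def] at this
  rw [hmap] at h3
  rw [← h3, h2]

set_option maxHeartbeats 1000000 in
set_option synthInstance.maxHeartbeats 400000 in
/-- Package: the separable closure of `A` in `L` (for direction ←). -/
lemma packLeft {K L : Type} [Field K] [Field L] (g : K →+* L) (A : Subfield K) :
    ∃ (M : Type) (_ : Field M) (h : ↥A →+* M) (e : M →+* L),
      (∀ x : M, IsSepElem h x) ∧ (∀ c : ↥A, e (h c) = g ((A.subtype) c)) ∧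
      Function.Injective e ∧
      (∀ y : L, IsSepElem (g.comp A.subtype) y → ∃ m : M, e m = y) := by
  letI : Algebra ↥A L := (g.comp A.subtype).toAlgebra
  set S := separableClosure ↥A L with hS
  refine ⟨↥S, inferInstance, algebraMap ↥A ↥S, S.val.toRingHom, ?_, fun c => rfl,
    Subtype.val_injective, ?_⟩
  · intro x
    have hx : IsSeparable ↥A (x : L) := x.2
    refine ⟨minpoly ↥A (x : L), minpoly.ne_zero hx.isIntegral, hx, ?_⟩
    apply Subtype.val_injective
    have h1 : S.val.toRingHom (eval₂ (algebraMap ↥A ↥S) x (minpoly ↥A (x : L)))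
        = eval₂ (S.val.toRingHom.comp (algebraMap ↥A ↥S)) (S.val.toRingHom x)
          (minpoly ↥A (x : L)) := Polynomial.hom_eval₂ _ _ _ _
    have h2 : S.val.toRingHom.comp (algebraMap ↥A ↥S) = algebraMap ↥A L := rfl
    show S.val.toRingHom _ = _
    rw [h1, h2]
    show eval₂ (algebraMap ↥A L) (x : L) (minpoly ↥A (x : L)) = (0 : ↥S).val
    rw [← aeval_def, minpoly.aeval]
    rfl
  · intro y hy
    have : IsSeparable ↥A y := by
      obtain ⟨p, h0, hs, he⟩ := hy
      exact hs.of_dvd (minpoly.dvd ↥A y (by rwa [aeval_def]))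
    exact ⟨⟨y, this⟩, rfl⟩

set_option maxHeartbeats 1000000 in
set_option synthInstance.maxHeartbeats 400000 in
/-- Package: a common separable extension (for direction →). -/
lemma packRight {K M : Type} [Field K] [Field M] (A : Subfield K) (h : ↥A →+* M)
    (hsep : ∀ x : M, IsSepElem h x) :
    ∃ (L : Type) (_ : Field L) (g : K →+* L) (e : M →+* L),
      (∀ z : L, IsSepElem g z) ∧ (∀ c : ↥A, e (h c) = g (A.subtype c)) ∧
      Function.Injective e := by
  letI : Algebra ↥A M := h.toAlgebra
  letI Ω : Type := AlgebraicClosure K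
  haveI : Algebra.IsAlgebraic ↥A M := ⟨fun m => by
    obtain ⟨p, h0, _, he⟩ := hsep m
    exact ⟨p, h0, by rwa [aeval_def]⟩⟩
  haveI : Module.IsTorsionFree ↥A M :=
    Module.isTorsionFree_iff_algebraMap_injective.mpr (algebraMap ↥A M).injective
  let e₀ : M →ₐ[↥A] Ω := IsAlgClosed.lift
  set S := separableClosure K Ω with hS
  have hcomm : ∀ c : ↥A, e₀ (h c) = algebraMap K Ω (A.subtype c) := fun c => e₀.commutes c
  have hmem : ∀ m : M, e₀ m ∈ S := by
    intro m
    obtain ⟨p, h0, hs, he⟩ := hsep m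
    have heval : eval₂ (algebraMap K Ω) (e₀ m) (p.map (algebraMap ↥A K)) = 0 := by
      rw [eval₂_map]
      have h2 : (algebraMap K Ω).comp (algebraMap ↥A K) = algebraMap ↥A Ω := rfl
      rw [h2]
      have h5 : (e₀ : M →+* Ω) (eval₂ (algebraMap ↥A M) m p) = 0 := by
        rw [show eval₂ (algebraMap ↥A M) m p = 0 from he, map_zero]
      have h6 := (Polynomial.hom_eval₂ p (algebraMap ↥A M) (e₀ : M →+* Ω) m).symm.trans h5
      rw [show ((e₀ : M →+* Ω)).comp (algebraMap ↥A M) = algebraMap ↥A Ω from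
        RingHom.ext fun c => e₀.commutes c] at h6
      exact h6
    have hsepmin : (minpoly K (e₀ m)).Separable :=
      (hs.map).of_dvd (minpoly.dvd K _ (by rwa [aeval_def]))
    exact hsepmin
  let e : M →+* ↥S :=
    { toFun := fun m => ⟨e₀ m, hmem m⟩
      map_one' := Subtype.ext (map_one e₀)
      map_mul' := fun a b => Subtype.ext (map_mul e₀ a b)
      map_zero' := Subtype.ext (map_zero e₀)
      map_add' := fun a b => Subtype.ext (map_add e₀ a b) }
  refine ⟨↥S, inferInstance, algebraMap K ↥S, e, ?_, ?_, ?_⟩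
  · intro z
    have hz : IsSeparable K (z : Ω) := z.2
    refine ⟨minpoly K (z : Ω), minpoly.ne_zero hz.isIntegral, hz, ?_⟩
    apply Subtype.val_injective
    have h1 : S.val.toRingHom (eval₂ (algebraMap K ↥S) z (minpoly K (z : Ω)))
        = eval₂ (S.val.toRingHom.comp (algebraMap K ↥S)) (S.val.toRingHom z)
          (minpoly K (z : Ω)) := Polynomial.hom_eval₂ _ _ _ _
    have h2 : S.val.toRingHom.comp (algebraMap K ↥S) = algebraMap K Ω := rfl
    show S.val.toRingHom _ = _
    rw [h1, h2]
    show eval₂ (algebraMap K Ω) (z : Ω) (minpoly K (z : Ω)) = (0 : ↥S).val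
    rw [← aeval_def, minpoly.aeval]
    rfl
  · intro c
    exact Subtype.ext (hcomm c)
  · intro a b hab
    exact (e₀ : M →+* Ω).injective (congrArg Subtype.val hab)

end Aux

set_option maxHeartbeats 1000000 in
/-- Let `A i` be the algebraic closure of `k` inside `K i` (as a subfield), with the induced
embeddings `k →+* A i`. Then the family `{f i}` satisfies property (F) if and only if the
family of induced embeddings does. -/
theorem stmt_5 {ι : Type} [Finite ι] (k : Type) [Field k] (K : ι → Type) [∀ i, Field (K i)]
    (f : ∀ i, k →+* K i)
    (A : ∀ i, Subfield (K i))
    (hA : ∀ i (x : K i), x ∈ A i ↔ IsAlgElem (f i) x)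
    (hmem : ∀ i (c : k), f i c ∈ A i) :
    PropertyF k K f ↔
      PropertyF k (fun i => (A i : Type)) (fun i => (f i).codRestrict (A i).toSubring (hmem i)) := by
  set a : ∀ i, k →+* ↥(A i) := fun i => (f i).codRestrict (A i).toSubring (hmem i) with ha
  constructor
  · -- →
    intro H M instM h hMsep l hl hdiag halg x hx
    have pack := fun i => packRight (A i) (h i) (hMsep i)
    choose L instL g e hLsep hcomm hinj using pack
    let Φ : (∀ i, M i) →+* (∀ i, L i) := Pi.ringHom fun i => (e i).comp (Pi.evalRingHom M i)
    have hΦinj : Function.Injective Φ := fun u v huv => funext fun i => hinj i (congrFun huv i)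
    have hcompeq : Φ.comp (Pi.ringHom fun i => (h i).comp (a i))
        = Pi.ringHom fun i => (g i).comp (f i) := by
      refine RingHom.ext fun c => funext fun i => ?_
      exact hcomm i (a i c)
    have hdiag' : ∀ c : k, (fun i => g i (f i c)) ∈ l.map Φ := by
      intro c
      refine ⟨fun i => h i (a i c), hdiag c, funext fun i => ?_⟩
      exact hcomm i (a i c)
    have halg' : ∀ z ∈ l.map Φ, IsAlgElem (Pi.ringHom fun i => (g i).comp (f i)) z := by
      rintro z ⟨w, hw, rfl⟩
      obtain ⟨p, p0, hp⟩ := halg w hw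
      exact ⟨p, p0, by
        rw [← hcompeq, ← Polynomial.hom_eval₂, hp, map_zero]⟩
    obtain ⟨p, p0, psep, hp⟩ := H L instL g hLsep (l.map Φ) (isField_map Φ hΦinj l hl)
      hdiag' halg' (Φ x) ⟨x, hx, rfl⟩
    refine ⟨p, p0, psep, hΦinj ?_⟩
    rw [Polynomial.hom_eval₂, hcompeq, hp, map_zero]
  · -- ←
    intro H L instL g hLsep l hl hdiag halg x hx
    have pack := fun i => packLeft (g i) (A i)
    choose M instM h e hMsep hcomm hinj hsurj using pack
    let J : (∀ i, M i) →+* (∀ i, L i) := Pi.ringHom fun i => (e i).comp (Pi.evalRingHom M i)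
    have hJinj : Function.Injective J := fun u v huv => funext fun i => hinj i (congrFun huv i)
    have hcompeq : J.comp (Pi.ringHom fun i => (h i).comp (a i))
        = Pi.ringHom fun i => (g i).comp (f i) := by
      refine RingHom.ext fun c => funext fun i => ?_
      exact hcomm i (a i c)
    have hcoord : ∀ w ∈ l, ∀ i, ∃ m : M i, e i m = w i := by
      intro w hw i
      apply hsurj i
      apply keyX (f i) (g i) (A i) (hA i) (w i) ?_ (hLsep i (w i))
      obtain ⟨p, p0, hp⟩ := halg w hw
      refine ⟨p, p0, ?_⟩
      have h6 := Polynomial.hom_eval₂ p (Pi.ringHom fun j => (g j).comp (f j))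
        (Pi.evalRingHom L i) w
      rw [hp, map_zero] at h6
      rw [show (Pi.evalRingHom L i).comp (Pi.ringHom fun j => (g j).comp (f j))
        = (g i).comp (f i) from rfl] at h6
      exact h6.symm
    have hll : ∀ w ∈ l, ∃ w' : (∀ i, M i), J w' = w := by
      intro w hw
      exact ⟨fun i => (hcoord w hw i).choose, funext fun i => (hcoord w hw i).choose_spec⟩
    set l' : Subring (∀ i, M i) := l.comap J with hl'
    have hl'field : IsField l' := by
      refine ⟨?_, mul_comm, ?_⟩
      · refine ⟨0, 1, fun hc => ?_⟩
        have h01 : (0 : ∀ i, M i) = 1 := congrArg Subtype.val hc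
        have : (0 : ∀ i, L i) = 1 := by
          have := congrArg J h01
          rwa [map_zero, map_one] at this
        have h2 : ((0 : l) : ∀ i, L i) = ((1 : l) : ∀ i, L i) := this
        obtain ⟨u, v, huv⟩ := hl.exists_pair_ne
        letI : Field ↥l := hl.toField
        exact zero_ne_one (Subtype.ext h2 : (0 : l) = 1)
      · intro u hu0
        have hY : J u.val ∈ l := u.2
        have hYne : (⟨J u.val, hY⟩ : l) ≠ 0 := by
          intro hc
          apply hu0
          have : J u.val = 0 := congrArg Subtype.val hc
          have h2 : u.val = 0 := hJinj (by rw [this, map_zero])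
          exact Subtype.ext h2
        obtain ⟨Z, hZ⟩ := hl.mul_inv_cancel hYne
        obtain ⟨z', hz'⟩ := hll Z.val Z.2
        refine ⟨⟨z', show J z' ∈ l by rw [hz']; exact Z.2⟩, ?_⟩
        apply Subtype.ext
        apply hJinj
        show J (u.val * z') = J 1
        rw [map_mul, map_one, hz']
        exact congrArg Subtype.val hZ
    have hdiag' : ∀ c : k, (fun i => h i (a i c)) ∈ l' := by
      intro c
      show J (fun i => h i (a i c)) ∈ l
      have : J (fun i => h i (a i c)) = fun i => g i (f i c) :=
        funext fun i => hcomm i (a i c)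
      rw [this]
      exact hdiag c
    have halg' : ∀ w ∈ l', IsAlgElem (Pi.ringHom fun i => (h i).comp (a i)) w := by
      intro w hw
      obtain ⟨p, p0, hp⟩ := halg (J w) hw
      refine ⟨p, p0, hJinj ?_⟩
      rw [Polynomial.hom_eval₂, hcompeq, hp, map_zero]
    obtain ⟨x', hx'⟩ := hll x hx
    have hx'mem : x' ∈ l' := by show J x' ∈ l; rw [hx']; exact hx
    obtain ⟨p, p0, psep, hp⟩ := H M instM h hMsep l' hl'field hdiag' halg' x' hx'mem
    refine ⟨p, p0, psep, ?_⟩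
    rw [← hx', ← hcompeq, ← Polynomial.hom_eval₂, hp, map_zero]
end

section
/- Let k₀ be a perfect field of characteristic p > 0 and let k be an extension field of k₀ of transcendence degree at most 1 over k₀. Then [k : k^p] ≤ p. -/
set_option linter.unusedSectionVars false
set_option maxHeartbeats 1000000
set_option synthInstance.maxHeartbeats 400000

open Polynomial Finset

section Helpers


theorem coeff_sum_CXpow {R : Type*} [CommRing R] (c : ℕ → R) (n i : ℕ) :
    (∑ j ∈ Finset.range n, Polynomial.C (c j) * Polynomial.X ^ j).coeff i
      = if i < n then c i else 0 := by
  rw [Polynomial.finset_sum_coeff]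
  simp only [Polynomial.coeff_C_mul, Polynomial.coeff_X_pow, mul_ite, mul_one, mul_zero]
  rw [Finset.sum_ite_eq (Finset.range n) i c]
  simp [Finset.mem_range]

theorem sum_ext {M : Type*} [AddCommMonoid M] (c : ℕ → M) {n n' : ℕ} (h : n ≤ n')
    (hz : ∀ m, n ≤ m → c m = 0) :
    ∑ m ∈ Finset.range n', c m = ∑ m ∈ Finset.range n, c m :=
  (Finset.sum_subset (Finset.range_subset_range.2 h)
    (fun x _ hnx => hz x (by simpa using hnx))).symm

theorem sum_range_pmul {M : Type*} [AddCommMonoid M] (p N : ℕ) (f : ℕ → M) :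
    ∑ m ∈ Finset.range (p * N), f m = ∑ i ∈ Finset.range N, ∑ r ∈ Finset.range p, f (p * i + r) := by
  induction N with
  | zero => simp
  | succ N ih =>
      rw [Nat.mul_succ, Finset.sum_range_add, ih, Finset.sum_range_succ]

theorem sum4_swap {M : Type*} [AddCommMonoid M] (s1 s2 s3 s4 : Finset ℕ)
    (g : ℕ → ℕ → ℕ → ℕ → M) :
    ∑ a ∈ s1, ∑ b ∈ s2, ∑ c ∈ s3, ∑ d ∈ s4, g a b c d
      = ∑ b ∈ s2, ∑ d ∈ s4, ∑ a ∈ s1, ∑ c ∈ s3, g a b c d := by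
  rw [Finset.sum_comm]
  refine Finset.sum_congr rfl fun b _ => ?_
  rw [show (∑ a ∈ s1, ∑ c ∈ s3, ∑ d ∈ s4, g a b c d)
      = ∑ a ∈ s1, ∑ d ∈ s4, ∑ c ∈ s3, g a b c d from
    Finset.sum_congr rfl fun a _ => Finset.sum_comm, Finset.sum_comm]



variable (p : ℕ) [Fact p.Prime] {k : Type*} [Field k] [CharP k p]


theorem integral_of_pow_mem (L : Subfield k) {α : k} (hpow : α ^ p ∈ L) :
    IsIntegral ↥L α := by
  refine ⟨X ^ p - C ⟨α ^ p, hpow⟩, monic_X_pow_sub_C _ (Fact.out : p.Prime).ne_zero, ?_⟩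
  have h : (algebraMap ↥L k) ⟨α ^ p, hpow⟩ = α ^ p := rfl
  simp [eval₂_sub, h]

theorem minpoly_natDegree_eq (L : Subfield k) {α : k} (hpow : α ^ p ∈ L) (hα : α ∉ L) :
    (minpoly ↥L α).natDegree = p := by
  have hp : p.Prime := Fact.out
  have hint : IsIntegral ↥L α := integral_of_pow_mem p L hpow
  have hdvd : minpoly ↥L α ∣ (X ^ p - C ⟨α ^ p, hpow⟩) := by
    apply minpoly.dvd
    have h : (algebraMap ↥L k) ⟨α ^ p, hpow⟩ = α ^ p := rfl
    simp [h]
  set P := (minpoly ↥L α).map (algebraMap ↥L k) with hPdef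
  have hPdvd : P ∣ (X - C α) ^ p := by
    have h1 : ((X : k[X]) - C α) ^ p = X ^ p - C (α ^ p) := by
      rw [sub_pow_char, ← C_pow]
    rw [h1]
    have h2 : (X ^ p - C ⟨α ^ p, hpow⟩ : Polynomial ↥L).map (algebraMap ↥L k)
        = X ^ p - C (α ^ p) := by
      rw [Polynomial.map_sub, Polynomial.map_pow, map_X, map_C]
      rfl
    exact h2 ▸ Polynomial.map_dvd _ hdvd
  obtain ⟨i, hip, hassoc⟩ := (dvd_prime_pow (Polynomial.prime_X_sub_C α) p).1 hPdvd
  have hPmonic : P.Monic := (minpoly.monic hint).map _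
  have hP : P = (X - C α) ^ i :=
    Polynomial.eq_of_monic_of_associated hPmonic ((monic_X_sub_C α).pow i) hassoc
  have hdeg : (minpoly ↥L α).natDegree = i := by
    have := congrArg Polynomial.natDegree hP
    rwa [Polynomial.natDegree_map, Polynomial.natDegree_pow, Polynomial.natDegree_X_sub_C,
      mul_one] at this
  have hipos : 0 < i := hdeg ▸ minpoly.natDegree_pos hint
  rcases eq_or_lt_of_le hip with h | hilt
  · omega
  · exfalso
    apply hα
    have hcoeff : P.coeff (i - 1) = -α * i := by
      rw [hP, sub_eq_add_neg, ← map_neg C α, Polynomial.coeff_X_add_C_pow]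
      rw [show i - (i - 1) = 1 by omega, pow_one,
        Nat.choose_symm (show 1 ≤ i by omega), Nat.choose_one_right]
    have hmemc : P.coeff (i - 1) ∈ L := by
      rw [hPdef, Polynomial.coeff_map]
      exact ((minpoly ↥L α).coeff (i - 1)).2
    rw [hcoeff] at hmemc
    have hine : ((i : k)) ≠ 0 := fun h0 =>
      absurd (Nat.le_of_dvd hipos ((CharP.cast_eq_zero_iff k p i).1 h0)) (by omega)
    have hα' : α = -(-α * i) * (i : k)⁻¹ := by
      field_simp
    rw [hα']
    exact mul_mem (neg_mem hmemc) (inv_mem (natCast_mem L i))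


theorem pow_indep (L : Subfield k) {α : k} (hpow : α ^ p ∈ L) (hα : α ∉ L)
    (c : ℕ → k) (hc : ∀ i, c i ∈ L)
    (hsum : ∑ i ∈ Finset.range p, c i * α ^ i = 0) :
    ∀ i, i < p → c i = 0 := by
  have hp : p.Prime := Fact.out
  have hint : IsIntegral ↥L α := integral_of_pow_mem p L hpow
  by_contra hcon
  push_neg at hcon
  obtain ⟨i₀, hi₀, hc₀⟩ := hcon
  set Q : Polynomial ↥L := ∑ i ∈ Finset.range p, C (⟨c i, hc i⟩ : ↥L) * X ^ i with hQdef
  have hQne : Q ≠ 0 := by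
    intro h0
    have := coeff_sum_CXpow (fun i => (⟨c i, hc i⟩ : ↥L)) p i₀
    rw [← hQdef, h0] at this
    simp only [Polynomial.coeff_zero, if_pos hi₀] at this
    exact hc₀ (congrArg Subtype.val this.symm)
  have hQeval : Polynomial.aeval α Q = 0 := by
    rw [hQdef, map_sum]
    have : ∀ i, Polynomial.aeval α (C (⟨c i, hc i⟩ : ↥L) * X ^ i) = c i * α ^ i := by
      intro i
      rw [map_mul, Polynomial.aeval_C, map_pow, Polynomial.aeval_X]
      rfl
    rw [Finset.sum_congr rfl fun i _ => this i, hsum]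
  have hle := minpoly.degree_le_of_ne_zero ↥L α hQne hQeval
  have hdegQ : Q.degree < (p : ℕ) := by
    rw [Polynomial.degree_lt_iff_coeff_zero]
    intro m hm
    rw [hQdef, coeff_sum_CXpow]
    rw [if_neg (by exact_mod_cast not_lt.2 hm)]
  have hdegmin : (minpoly ↥L α).degree = (p : ℕ) := by
    rw [Polynomial.degree_eq_natDegree (minpoly.ne_zero hint), minpoly_natDegree_eq p L hpow hα]
  rw [hdegmin] at hle
  exact absurd (lt_of_le_of_lt hle hdegQ) (lt_irrefl _)


variable {k₀ : Type*} [Field k₀] [CharP k₀ p] [PerfectRing k₀ p] [Algebra k₀ k] [ExpChar k p]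

theorem core (u v : k)
    (Hind : ∀ d : ℕ → ℕ → k, (∀ r s, d r s ∈ (frobenius k p).fieldRange) →
      (∑ r ∈ Finset.range p, ∑ s ∈ Finset.range p, d r s * u ^ r * v ^ s) = 0 →
      ∀ r s, r < p → s < p → d r s = 0) :
    ∀ n (arr : ℕ → ℕ → k₀), (∀ m l, n ≤ m ∨ n ≤ l → arr m l = 0) →
      (∑ m ∈ Finset.range n, ∑ l ∈ Finset.range n,
        algebraMap k₀ k (arr m l) * u ^ m * v ^ l) = 0 →
      ∀ m l, arr m l = 0 := by
  have hp : p.Prime := Fact.out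
  intro n
  induction n using Nat.strong_induction_on with
  | _ n IH =>
  intro arr hbd hS m l
  rcases Nat.lt_or_ge n 2 with hn2 | hn2
  · -- n = 0 or 1
    rcases Nat.lt_or_ge m n with hm | hm
    · rcases Nat.lt_or_ge l n with hl | hl
      · -- m = l = 0, n = 1
        have hn1 : n = 1 := by omega
        have hm0 : m = 0 := by omega
        have hl0 : l = 0 := by omega
        subst hn1 hm0 hl0
        simp only [Finset.sum_range_one, pow_zero, mul_one] at hS
        exact (algebraMap k₀ k).injective (by rw [hS, map_zero])
      · exact hbd m l (Or.inr hl)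
    · exact hbd m l (Or.inl hm)
  · -- main case
    set ρ : k₀ → k₀ := fun c => (frobeniusEquiv k₀ p).symm c with hρ
    set n' := (n - 1) / p + 1 with hn'def
    have hppos : 0 < p := hp.pos
    have hdm := Nat.div_add_mod (n - 1) p
    have hmlt := Nat.mod_lt (n - 1) hppos
    have hnp : n ≤ p * n' := by
      have : p * n' = p * ((n - 1) / p) + p := by rw [hn'def, Nat.mul_succ]
      omega
    have hn'lt : n' < n := by
      have h3 : (n - 1) / p ≤ (n - 1) / 2 := Nat.div_le_div_right (by omega) |>.trans
        (Nat.div_le_div_left hp.two_le (by omega))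
      have h4 : (n - 1) / 2 < n - 1 := Nat.div_lt_self (by omega) (by omega)
      omega
    set b : ℕ → ℕ → ℕ → ℕ → k₀ := fun r s m' l' => ρ (arr (p * m' + r) (p * l' + s)) with hb
    -- the big sum over range (p * n')
    have hSbig : (∑ m ∈ Finset.range (p * n'), ∑ l ∈ Finset.range (p * n'),
        algebraMap k₀ k (arr m l) * u ^ m * v ^ l) = 0 := by
      rw [sum_ext _ hnp (fun m1 hm1 => ?_)]
      · rw [← hS]
        refine Finset.sum_congr rfl fun m1 hm1 => ?_
        exact sum_ext _ hnp fun l1 hl1 => by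
          rw [hbd m1 l1 (Or.inr hl1), map_zero, zero_mul, zero_mul]
      · exact Finset.sum_eq_zero fun l1 _ => by
          rw [hbd m1 l1 (Or.inl hm1), map_zero, zero_mul, zero_mul]
    -- split identity
    have hsplit : (∑ m ∈ Finset.range (p * n'), ∑ l ∈ Finset.range (p * n'),
        algebraMap k₀ k (arr m l) * u ^ m * v ^ l)
        = ∑ r ∈ Finset.range p, ∑ s ∈ Finset.range p,
            (∑ m' ∈ Finset.range n', ∑ l' ∈ Finset.range n',
              algebraMap k₀ k (b r s m' l') * u ^ m' * v ^ l') ^ p * u ^ r * v ^ s := by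
      have key : ∀ r ∈ Finset.range p, ∀ s ∈ Finset.range p,
          (∑ m' ∈ Finset.range n', ∑ l' ∈ Finset.range n',
            algebraMap k₀ k (b r s m' l') * u ^ m' * v ^ l') ^ p * u ^ r * v ^ s
          = ∑ i ∈ Finset.range n', ∑ j ∈ Finset.range n',
              algebraMap k₀ k (arr (p * i + r) (p * j + s)) * u ^ (p * i + r)
                * v ^ (p * j + s) := by
        intro r _ s _
        rw [sum_pow_char, Finset.sum_congr rfl fun i _ => sum_pow_char _ _ _,
          Finset.sum_mul, Finset.sum_mul]
        refine Finset.sum_congr rfl fun i _ => ?_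
        rw [Finset.sum_mul, Finset.sum_mul]
        refine Finset.sum_congr rfl fun j _ => ?_
        rw [mul_pow, mul_pow, ← map_pow]
        rw [hb]; simp only [hρ]
        rw [frobeniusEquiv_symm_pow_p]
        rw [← pow_mul, ← pow_mul]
        ring
      rw [Finset.sum_congr rfl fun r hr => Finset.sum_congr rfl fun s hs => key r hr s hs]
      rw [sum_range_pmul, Finset.sum_congr rfl fun i _ => Finset.sum_congr rfl fun r _ =>
        sum_range_pmul p n' _]
      rw [sum4_swap]
    have hz : ∀ r s, r < p → s < p →
        (∑ m' ∈ Finset.range n', ∑ l' ∈ Finset.range n',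
          algebraMap k₀ k (b r s m' l') * u ^ m' * v ^ l') = 0 := by
      intro r s hr hs
      have happ := Hind (fun r s => (∑ m' ∈ Finset.range n', ∑ l' ∈ Finset.range n',
          algebraMap k₀ k (b r s m' l') * u ^ m' * v ^ l') ^ p)
        (fun r s => ⟨_, rfl⟩)
        (by rw [← hsplit]; exact hSbig) r s hr hs
      exact pow_eq_zero_iff hp.ne_zero |>.1 happ
    -- apply IH
    rcases Nat.lt_or_ge m n with hm | hm
    · rcases Nat.lt_or_ge l n with hl | hl
      · have hr := Nat.mod_lt m hppos
        have hs := Nat.mod_lt l hppos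
        have hIH := IH n' hn'lt (b (m % p) (l % p))
          (fun m' l' h' => ?_) (hz (m % p) (l % p) hr hs) (m / p) (l / p)
        · have hbval : b (m % p) (l % p) (m / p) (l / p) = ρ (arr m l) := by
            rw [hb]
            simp only
            rw [Nat.div_add_mod, Nat.div_add_mod]
          rw [hbval] at hIH
          exact (frobeniusEquiv k₀ p).symm.injective (hIH.trans (map_zero _).symm)
        · -- bounds for b
          rcases h' with h' | h'
          · have hz0 : arr (p * m' + m % p) (p * l' + l % p) = 0 := by
              refine hbd _ _ (Or.inl ?_)
              calc n ≤ p * n' := hnp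
              _ ≤ p * m' := Nat.mul_le_mul_left _ h'
              _ ≤ p * m' + m % p := Nat.le_add_right _ _
            rw [hb]; simp only
            rw [hz0]
            exact map_zero ((frobeniusEquiv k₀ p).symm)
          · have hz0 : arr (p * m' + m % p) (p * l' + l % p) = 0 := by
              refine hbd _ _ (Or.inr ?_)
              calc n ≤ p * n' := hnp
              _ ≤ p * l' := Nat.mul_le_mul_left _ h'
              _ ≤ p * l' + l % p := Nat.le_add_right _ _
            rw [hb]; simp only
            rw [hz0]
            exact map_zero ((frobeniusEquiv k₀ p).symm)
      · exact hbd m l (Or.inr hl)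
    · exact hbd m l (Or.inl hm)

theorem clearing (u v : k)
    (h : IsAlgebraic ↥(IntermediateField.adjoin k₀ {v}) u) :
    ∃ (n : ℕ) (arr : ℕ → ℕ → k₀), (∀ m l, n ≤ m ∨ n ≤ l → arr m l = 0) ∧
      (∃ m l, arr m l ≠ 0) ∧
      (∑ m ∈ Finset.range n, ∑ l ∈ Finset.range n,
        algebraMap k₀ k (arr m l) * u ^ m * v ^ l) = 0 := by
  obtain ⟨g, hg0, hgu⟩ := h
  have hrep : ∀ i : ℕ, ∃ PQ : k₀[X] × k₀[X], (Polynomial.aeval v PQ.2) ≠ 0 ∧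
      ((g.coeff i : k) * Polynomial.aeval v PQ.2 = Polynomial.aeval v PQ.1) := by
    intro i
    obtain ⟨P, Q, hPQ⟩ := (IntermediateField.mem_adjoin_simple_iff k₀ _).1 (g.coeff i).2
    by_cases hQ : Polynomial.aeval v Q = 0
    · refine ⟨⟨0, 1⟩, by simp, ?_⟩
      rw [hQ, div_zero] at hPQ
      simp [hPQ]
    · exact ⟨⟨P, Q⟩, hQ, by rw [hPQ, div_mul_cancel₀ _ hQ]⟩
  choose PQ hQ hPQ using hrep
  set n₁ := g.natDegree + 1 with hn₁
  set R : ℕ → k₀[X] := fun i => (PQ i).1 * ∏ j ∈ (Finset.range n₁).erase i, (PQ j).2 with hR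
  have hRv : ∀ i ∈ Finset.range n₁, Polynomial.aeval v (R i)
      = (g.coeff i : k) * ∏ j ∈ Finset.range n₁, Polynomial.aeval v (PQ j).2 := by
    intro i hi
    rw [hR]; simp only
    rw [map_mul, map_prod, ← hPQ i, ← Finset.mul_prod_erase _ _ hi]
    ring
  have hprod0 : (∏ j ∈ Finset.range n₁, Polynomial.aeval v (PQ j).2) ≠ 0 :=
    Finset.prod_ne_zero_iff.2 fun j _ => hQ j
  set n := ∑ m ∈ Finset.range n₁, ((R m).natDegree + 1) with hn
  have hn₁n : n₁ ≤ n := by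
    rw [hn]
    calc n₁ = ∑ _m ∈ Finset.range n₁, 1 := by simp
    _ ≤ _ := Finset.sum_le_sum fun m _ => by omega
  have hRn : ∀ m ∈ Finset.range n₁, (R m).natDegree < n := by
    intro m hm
    have h5 : (R m).natDegree + 1 ≤ n := Finset.single_le_sum
      (f := fun m => (R m).natDegree + 1) (fun i _ => Nat.zero_le _) hm
    omega
  set arr : ℕ → ℕ → k₀ := fun m l => if m < n₁ then (R m).coeff l else 0 with harr
  refine ⟨n, arr, ?_, ?_, ?_⟩
  · intro m l hml
    rw [harr]; simp only
    rcases hml with hml | hml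
    · rw [if_neg (by omega)]
    · split
      · exact Polynomial.coeff_eq_zero_of_natDegree_lt
          (lt_of_lt_of_le (hRn m (Finset.mem_range.2 (by assumption))) hml)
      · rfl
  · -- nonzero entry
    have hgc : g.coeff g.natDegree ≠ 0 := by
      intro h0
      exact hg0 (Polynomial.leadingCoeff_eq_zero.1 h0)
    have hgk : ((g.coeff g.natDegree : k)) ≠ 0 := by
      intro h0
      exact hgc (Subtype.ext h0)
    have hRi : Polynomial.aeval v (R g.natDegree) ≠ 0 := by
      rw [hRv g.natDegree (Finset.mem_range.2 (by omega))]
      exact mul_ne_zero hgk hprod0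
    have hR0 : R g.natDegree ≠ 0 := fun h0 => hRi (by rw [h0, map_zero])
    refine ⟨g.natDegree, (R g.natDegree).natDegree, ?_⟩
    rw [harr]; simp only
    rw [if_pos (by omega)]
    exact fun h0 => hR0 (Polynomial.leadingCoeff_eq_zero.1 h0)
  · -- the sum is zero
    have step1 : ∀ m, m < n₁ → (∑ l ∈ Finset.range n,
        algebraMap k₀ k (arr m l) * u ^ m * v ^ l)
        = Polynomial.aeval v (R m) * u ^ m := by
      intro m hm
      have hexp : Polynomial.aeval v (R m)
          = ∑ l ∈ Finset.range n, algebraMap k₀ k ((R m).coeff l) * v ^ l := by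
        rw [Polynomial.aeval_eq_sum_range' (hRn m (Finset.mem_range.2 hm)) v]
        exact Finset.sum_congr rfl fun l _ => by rw [Algebra.smul_def]
      rw [hexp, Finset.sum_mul]
      refine Finset.sum_congr rfl fun l _ => ?_
      rw [harr]; simp only
      rw [if_pos hm]
      ring
    have step0 : (∑ m ∈ Finset.range n, ∑ l ∈ Finset.range n,
        algebraMap k₀ k (arr m l) * u ^ m * v ^ l)
        = ∑ m ∈ Finset.range n₁, Polynomial.aeval v (R m) * u ^ m := by
      rw [sum_ext _ hn₁n (fun m hm => Finset.sum_eq_zero fun l _ => by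
        rw [harr]; simp only; rw [if_neg (by omega), map_zero, zero_mul, zero_mul])]
      exact Finset.sum_congr rfl fun m hm => step1 m (Finset.mem_range.1 hm)
    rw [step0]
    have step2 : ∀ m ∈ Finset.range n₁, Polynomial.aeval v (R m) * u ^ m
        = (∏ j ∈ Finset.range n₁, Polynomial.aeval v (PQ j).2)
          * ((g.coeff m : k) * u ^ m) := by
      intro m hm
      rw [hRv m hm]
      ring
    rw [Finset.sum_congr rfl step2, ← Finset.mul_sum]
    have hgsum : ∑ m ∈ Finset.range n₁, (g.coeff m : k) * u ^ m = 0 := by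
      have := Polynomial.aeval_eq_sum_range (p := g) u
      rw [hgu] at this
      rw [← hn₁] at this
      have h2 : ∀ m, (g.coeff m • u ^ m) = (g.coeff m : k) * u ^ m := by
        intro m
        rw [Algebra.smul_def]
        rfl
      rw [← Finset.sum_congr rfl fun m _ => h2 m]
      exact this.symm
    rw [hgsum, mul_zero]

theorem exchange (a x : k) (ht : Transcendental k₀ a)
    (n : ℕ) (arr : ℕ → ℕ → k₀) (hbd : ∀ m l, n ≤ m ∨ n ≤ l → arr m l = 0)
    (hne : ∃ m l, arr m l ≠ 0)
    (hS : (∑ m ∈ Finset.range n, ∑ l ∈ Finset.range n,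
      algebraMap k₀ k (arr m l) * a ^ m * x ^ l) = 0) :
    IsAlgebraic ↥(IntermediateField.adjoin k₀ {a}) x := by
  set q : ℕ → k₀[X] := fun l => ∑ m ∈ Finset.range n, C (arr m l) * X ^ m with hq
  have hqa : ∀ l, Polynomial.aeval a (q l) ∈ IntermediateField.adjoin k₀ {a} := by
    intro l
    exact IntermediateField.algebra_adjoin_le_adjoin k₀ _
      (Polynomial.aeval_mem_adjoin_singleton k₀ a)
  set h : Polynomial ↥(IntermediateField.adjoin k₀ {a}) :=
    ∑ l ∈ Finset.range n, C (⟨Polynomial.aeval a (q l), hqa l⟩ :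
      ↥(IntermediateField.adjoin k₀ {a})) * X ^ l with hh
  have hqeval : ∀ l, Polynomial.aeval a (q l)
      = ∑ m ∈ Finset.range n, algebraMap k₀ k (arr m l) * a ^ m := by
    intro l
    rw [hq]; simp only
    rw [map_sum]
    exact Finset.sum_congr rfl fun m _ => by
      rw [map_mul, Polynomial.aeval_C, map_pow, Polynomial.aeval_X]
  refine ⟨h, ?_, ?_⟩
  · obtain ⟨m₀, l₀, hml⟩ := hne
    have hm₀ : m₀ < n ∧ l₀ < n := by
      by_contra hcon
      exact hml (hbd m₀ l₀ (by omega))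
    have hq0 : q l₀ ≠ 0 := by
      intro h0
      have hco := coeff_sum_CXpow (fun m => arr m l₀) n m₀
      have heq : q l₀ = ∑ j ∈ Finset.range n, C (arr j l₀) * X ^ j := rfl
      rw [← heq, h0] at hco
      simp only [Polynomial.coeff_zero, if_pos hm₀.1] at hco
      exact hml hco.symm
    have hqv : Polynomial.aeval a (q l₀) ≠ 0 := by
      intro h0
      exact ht ⟨q l₀, hq0, h0⟩
    intro h0
    have := coeff_sum_CXpow
      (fun l => (⟨Polynomial.aeval a (q l), hqa l⟩ : ↥(IntermediateField.adjoin k₀ {a}))) n l₀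
    rw [← hh, h0] at this
    simp only [Polynomial.coeff_zero, if_pos hm₀.2] at this
    exact hqv (congrArg Subtype.val this.symm)
  · have : Polynomial.aeval x h = ∑ l ∈ Finset.range n,
        Polynomial.aeval a (q l) * x ^ l := by
      rw [hh, map_sum]
      refine Finset.sum_congr rfl fun l _ => ?_
      rw [map_mul, Polynomial.aeval_C, map_pow, Polynomial.aeval_X]
      rfl
    rw [this]
    rw [Finset.sum_congr rfl fun l _ => by rw [hqeval l, Finset.sum_mul]]
    rw [Finset.sum_comm]
    rw [← hS]

theorem algebraMap_mem_frobRange (c : k₀) :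
    algebraMap k₀ k c ∈ (frobenius k p).fieldRange := by
  refine ⟨algebraMap k₀ k ((frobeniusEquiv k₀ p).symm c), ?_⟩
  rw [frobenius_def, ← map_pow, frobeniusEquiv_symm_pow_p]

theorem alg_mem {a : k} (ha : IsAlgebraic k₀ a) : a ∈ (frobenius k p).fieldRange := by
  haveI : ExpChar k₀ p := ExpChar.prime Fact.out
  haveI : PerfectField k₀ := PerfectRing.toPerfectField k₀ p
  have hsep : (minpoly k₀ a).Separable :=
    PerfectField.separable_of_irreducible (minpoly.irreducible ha.isIntegral)
  haveI : Algebra.IsSeparable k₀ ↥(IntermediateField.adjoin k₀ {a}) :=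
    (IntermediateField.isSeparable_adjoin_simple_iff_isSeparable k₀ k).2 hsep
  have heq := IntermediateField.adjoin_eq_adjoin_pow_expChar_of_isSeparable k₀ k ({a} : Set k) p
  rw [Set.image_singleton] at heq
  have hmem : a ∈ IntermediateField.adjoin k₀ ({a ^ p} : Set k) :=
    heq ▸ IntermediateField.mem_adjoin_simple_self k₀ a
  set F' : IntermediateField k₀ k :=
    Subfield.toIntermediateField (frobenius k p).fieldRange
      (fun c => algebraMap_mem_frobRange p c) with hF'
  have hle : IntermediateField.adjoin k₀ ({a ^ p} : Set k) ≤ F' := by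
    rw [IntermediateField.adjoin_le_iff]
    intro z hz
    rw [Set.mem_singleton_iff] at hz
    subst hz
    exact ⟨a, rfl⟩
  exact hle hmem

end Helpers

/-- Let `k₀` be a perfect field of characteristic `p > 0` and let `k` be an extension field of
`k₀` of transcendence degree at most `1` over `k₀` (i.e. `k` is algebraic over the subfield
generated by `k₀` and a single element). Then `[k : k^p] ≤ p`. -/
theorem stmt_12 (p : ℕ) [Fact p.Prime] (k₀ : Type*) [Field k₀] [CharP k₀ p]
    [PerfectRing k₀ p] (k : Type*) [Field k] [Algebra k₀ k] [CharP k p] [ExpChar k p]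
    (htr : ∃ x : k, Algebra.IsAlgebraic ↥(IntermediateField.adjoin k₀ {x}) k) :
    Module.rank ↥((frobenius k p).fieldRange) k ≤ p := by
  obtain ⟨x, hx⟩ := htr
  by_cases hall : ∀ z : k, z ∈ (frobenius k p).fieldRange
  · have hbij : Function.Bijective (algebraMap ↥((frobenius k p).fieldRange) k) :=
      ⟨(algebraMap ↥((frobenius k p).fieldRange) k).injective, fun z => ⟨⟨z, hall z⟩, rfl⟩⟩
    let e := (AlgEquiv.ofBijective (Algebra.ofId ↥((frobenius k p).fieldRange) k)
      hbij).toLinearEquiv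
    rw [← e.rank_eq, Module.rank_self ↥((frobenius k p).fieldRange)]
    exact_mod_cast (Fact.out : p.Prime).one_lt.le
  · push_neg at hall
    obtain ⟨a, ha⟩ := hall
    have hap : a ^ p ∈ (frobenius k p).fieldRange := ⟨a, by rw [frobenius_def]⟩
    set F : Subfield k := (frobenius k p).fieldRange with hF
    set E : IntermediateField ↥F k := IntermediateField.adjoin ↥F {a} with hE
    have hFE : ∀ z ∈ F, z ∈ E.toSubfield := fun z hz => by
      rw [IntermediateField.mem_toSubfield]
      exact E.algebraMap_mem ⟨z, hz⟩
    have haE : a ∈ E.toSubfield := by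
      rw [IntermediateField.mem_toSubfield]
      exact IntermediateField.mem_adjoin_simple_self ↥F a
    have hmain : ∀ b : k, b ∈ E := by
      intro b
      by_contra hb
      have ht : Transcendental k₀ a := fun halg => ha (alg_mem p halg)
      obtain ⟨n₁, arr₁, hbd₁, hne₁, hS₁⟩ := clearing a x (hx.isAlgebraic a)
      have hxalg : IsAlgebraic ↥(IntermediateField.adjoin k₀ {a}) x :=
        exchange a x ht n₁ arr₁ hbd₁ hne₁ hS₁
      have hbC : IsAlgebraic ↥(IntermediateField.adjoin k₀ {a}) b := by
        set D2 : IntermediateField ↥(IntermediateField.adjoin k₀ {a}) k :=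
          IntermediateField.adjoin ↥(IntermediateField.adjoin k₀ {a}) {x} with hD2
        have hmemAD : ∀ w, w ∈ IntermediateField.adjoin k₀ {x} → w ∈ D2 := by
          intro w hw
          have hle : IntermediateField.adjoin k₀ {x}
              ≤ IntermediateField.restrictScalars k₀ D2 := by
            rw [IntermediateField.adjoin_le_iff]
            intro z hz
            rw [Set.mem_singleton_iff] at hz
            rw [hz, SetLike.mem_coe, IntermediateField.mem_restrictScalars]
            exact IntermediateField.mem_adjoin_simple_self _ x
          exact hle hw
        let f : ↥(IntermediateField.adjoin k₀ {x}) →+* ↥D2 :=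
          { toFun := fun z => ⟨z.1, hmemAD z.1 z.2⟩,
            map_one' := rfl, map_mul' := fun _ _ => rfl,
            map_zero' := rfl, map_add' := fun _ _ => rfl }
        have hbD2 : IsAlgebraic ↥D2 b := by
          have hcomp : (algebraMap ↥D2 k).comp f
              = (RingHom.id k).comp (algebraMap ↥(IntermediateField.adjoin k₀ {x}) k) := by
            ext z; rfl
          have := (hx.isAlgebraic b).ringHom_of_comp_eq f (RingHom.id k)
            (fun z w hzw => by
              apply Subtype.ext
              have h2 : (f z).1 = (f w).1 := congrArg Subtype.val hzw
              exact h2) hcomp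
          simpa using this
        haveI : FiniteDimensional ↥(IntermediateField.adjoin k₀ {a}) ↥D2 :=
          IntermediateField.adjoin.finiteDimensional hxalg.isIntegral
        haveI : Algebra.IsIntegral ↥(IntermediateField.adjoin k₀ {a}) ↥D2 :=
          Algebra.IsIntegral.of_finite _ _
        exact (isIntegral_trans _ hbD2.isIntegral).isAlgebraic
      obtain ⟨n₂, arr₂, hbd₂, hne₂, hS₂⟩ := clearing b a hbC
      have Hind : ∀ d : ℕ → ℕ → k, (∀ r s, d r s ∈ (frobenius k p).fieldRange) →
          (∑ r ∈ Finset.range p, ∑ s ∈ Finset.range p, d r s * b ^ r * a ^ s) = 0 →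
          ∀ r s, r < p → s < p → d r s = 0 := by
        intro d hd h0 r s hr hs
        have h0' : ∑ r' ∈ Finset.range p,
            (∑ s' ∈ Finset.range p, d r' s' * a ^ s') * b ^ r' = 0 := by
          rw [← h0]
          exact Finset.sum_congr rfl fun r' _ => by
            rw [Finset.sum_mul]
            exact Finset.sum_congr rfl fun s' _ => by ring
        have he : ∀ r', (∑ s' ∈ Finset.range p, d r' s' * a ^ s') ∈ E.toSubfield :=
          fun r' => sum_mem fun s' _ =>
            mul_mem (hFE _ (hd r' s')) (pow_mem haE s')
        have hbp : b ^ p ∈ E.toSubfield := hFE _ ⟨b, by rw [frobenius_def]⟩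
        have hbE : b ∉ E.toSubfield := fun hmem =>
          hb ((IntermediateField.mem_toSubfield _ _).1 hmem)
        have h1 := pow_indep p E.toSubfield hbp hbE _ he h0' r hr
        exact pow_indep p F hap ha (fun s' => d r s') (fun s' => hd r s') h1 s hs
      have hall0 := core p b a Hind n₂ arr₂ hbd₂ hS₂
      obtain ⟨m, l, hml⟩ := hne₂
      exact hml (hall0 m l)
    have hEtop : E = ⊤ := by
      rw [eq_top_iff]
      exact fun z _ => hmain z
    have hint : IsIntegral ↥F a := integral_of_pow_mem p F hap
    haveI : FiniteDimensional ↥F ↥E := IntermediateField.adjoin.finiteDimensional hint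
    have hfinrank : Module.finrank ↥F ↥E = p := by
      rw [hE, IntermediateField.adjoin.finrank hint, minpoly_natDegree_eq p F hap ha]
    let e : ↥E ≃ₗ[↥F] k := ((IntermediateField.equivOfEq hEtop).trans
      IntermediateField.topEquiv).toLinearEquiv
    rw [← e.rank_eq, ← Module.finrank_eq_rank ↥F ↥E, hfinrank]
end
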